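/- Let F be a field, V a finite-dimensional F-vector space, m ≥ 1, and suppose V = W₀ ⊕ W₁ ⊕ ⋯ ⊕ W_{m−1} is a direct sum of subspaces. Let π be a linear automorphism of V such that π(W_i) = W_{i+1 mod m} for all i. Then there exists a polynomial f ∈ F[T] of degree dim W₀ such that the characteristic polynomial of π equals f(T^m). -/

import Mathlib

open Polynomial


lemma coeff_eval₂_C_mul_X {R : Type*} [CommRing R] (s : R) (p : R[X]) (d : ℕ) :
    (Polynomial.eval₂ Polynomial.C (Polynomial.C s * Polynomial.X) p).coeff d
      = s ^ d * p.coeff d := by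
  rw [Polynomial.eval₂_eq_sum, Polynomial.sum_def, Polynomial.finset_sum_coeff]
  have hterm : ∀ e : ℕ, ∀ a : R,
      (Polynomial.C a * (Polynomial.C s * Polynomial.X) ^ e).coeff d
        = if e = d then s ^ e * a else 0 := by
    intro e a
    rw [mul_pow, ← Polynomial.C_pow, ← mul_assoc, ← Polynomial.C_mul,
      Polynomial.coeff_C_mul, Polynomial.coeff_X_pow]
    by_cases h : e = d
    · simp [h, mul_comm]
    · rw [if_neg h, if_neg (fun h' => h h'.symm), mul_zero]
  rw [Finset.sum_eq_single d]
  · rw [hterm]; simp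
  · intro e he hed
    rw [hterm, if_neg hed]
  · intro hd
    rw [hterm, Polynomial.notMem_support_iff.mp hd]
    simp

lemma key_matrix_lemma {F : Type*} [Field F] {m : ℕ} [NeZero m] {ι : Type*}
    [Fintype ι] [DecidableEq ι] (w : ι → ZMod m) (M : Matrix ι ι F)
    (hM : ∀ p q, w p ≠ w q + 1 → M p q = 0)
    (hcard : m ∣ Fintype.card ι)
    {d : ℕ} (hd : ¬ m ∣ d) : M.charpoly.coeff d = 0 := by
  rcases eq_or_lt_of_le (Nat.one_le_iff_ne_zero.mpr (NeZero.ne m)) with h1 | h1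
  · exact absurd (h1 ▸ one_dvd d) hd
  haveI : Fact (1 < m) := ⟨h1⟩
  -- the ring R = F[t]/(t^m - 1)
  set g : F[X] := X ^ m - 1 with hg
  have hgmonic : g.Monic := by
    have := monic_X_pow_sub_C (1 : F) (NeZero.ne m)
    simpa [hg] using this
  set R := AdjoinRoot g with hR
  set t : R := AdjoinRoot.root g with htdef
  have ht : t ^ m = 1 := by
    have h0 : AdjoinRoot.mk g g = 0 := AdjoinRoot.mk_self
    have h2 : t ^ m - 1 = 0 := by
      simpa [hg, htdef, ← AdjoinRoot.mk_X, map_sub, map_pow, map_one] using h0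
    exact sub_eq_zero.mp h2
  have hpow : ∀ a : ℕ, t ^ (a % m) = t ^ a := by
    intro a
    conv_rhs => rw [← Nat.mod_add_div a m]
    rw [pow_add, pow_mul, ht, one_pow, mul_one]
  set tinv : R := t ^ (m - 1) with htinv
  have htt : t * tinv = 1 := by
    rw [htinv, ← pow_succ']
    have h3 : m - 1 + 1 = m := by omega
    rw [h3, ht]
  have htN : t ^ Fintype.card ι = 1 := by
    obtain ⟨k, hk⟩ := hcard
    rw [hk, pow_mul, ht, one_pow]
  set M' : Matrix ι ι R := M.map (algebraMap F R) with hM'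
  set p : F[X] := M.charpoly with hp
  have hp' : M'.charpoly = p.map (algebraMap F R) := Matrix.charpoly_map M _
  -- diagonal entries of M vanish
  have hone : (1 : ZMod m) ≠ 0 := one_ne_zero
  have hdiag : ∀ pp, M pp pp = 0 := by
    intro pp
    refine hM pp pp fun h => hone ?_
    conv_lhs at h => rw [← add_zero (w pp)]
    exact (add_left_cancel h).symm
  -- key exponent identity
  have hkey : ∀ pp qq : ι, w pp = w qq + 1 →
      t ^ (w pp).val * tinv ^ (w qq).val = t := by
    intro pp qq h
    set b := (w qq).val with hb
    have hv : (w pp).val = (b + 1) % m := by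
      rw [h, ZMod.val_add, ZMod.val_one]
    rw [hv, hpow, htinv, ← pow_mul, ← pow_add]
    have h4 : b + 1 + (m - 1) * b = 1 + m * b := by
      cases m with
      | zero => exact absurd rfl (NeZero.ne 0)
      | succ mm => rw [Nat.succ_sub_one, Nat.succ_mul]; ring
    rw [h4, pow_add, pow_mul, ht, one_pow, mul_one, pow_one]
  -- conjugation by the diagonal matrix D
  set D : Matrix ι ι (Polynomial R) :=
    Matrix.diagonal fun q => Polynomial.C (t ^ (w q).val) with hD
  set E : Matrix ι ι (Polynomial R) :=
    Matrix.diagonal fun q => Polynomial.C (tinv ^ (w q).val) with hE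
  have hDE : D * E = 1 := by
    rw [hD, hE, Matrix.diagonal_mul_diagonal]
    have h4 : (fun i => Polynomial.C (t ^ (w i).val) * Polynomial.C (tinv ^ (w i).val))
        = fun _ : ι => (1 : Polynomial R) := by
      funext i
      rw [← Polynomial.C_mul, ← mul_pow, htt, one_pow, Polynomial.C_1]
    rw [h4, Matrix.diagonal_one]
  have hconj : D * Matrix.charmatrix M' * E = Matrix.charmatrix (t • M') := by
    refine Matrix.ext fun pp qq => ?_
    rw [hD, hE, Matrix.mul_diagonal, Matrix.diagonal_mul]
    by_cases hpq : pp = qq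
    · subst hpq
      rw [Matrix.charmatrix_apply_eq, Matrix.charmatrix_apply_eq]
      have : M' pp pp = 0 := by rw [hM', Matrix.map_apply, hdiag, map_zero]
      rw [this, Matrix.smul_apply, this, smul_zero, map_zero, sub_zero,
        mul_right_comm, ← Polynomial.C_mul, ← mul_pow, htt, one_pow,
        Polynomial.C_1, one_mul]
    · rw [Matrix.charmatrix_apply_ne _ _ _ hpq, Matrix.charmatrix_apply_ne _ _ _ hpq]
      by_cases h0 : M pp qq = 0
      · have : M' pp qq = 0 := by rw [hM', Matrix.map_apply, h0, map_zero]
        rw [this, Matrix.smul_apply, this, smul_zero, map_zero, neg_zero,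
          mul_zero, zero_mul]
      · have hw : w pp = w qq + 1 := by
          by_contra hw
          exact h0 (hM pp qq hw)
        rw [Matrix.smul_apply, smul_eq_mul, mul_neg, neg_mul, ← Polynomial.C_mul,
          ← Polynomial.C_mul]
        congr 1
        rw [mul_right_comm, hkey pp qq hw]
  -- equality of the two characteristic polynomials
  have hdet1 : M'.charpoly = (t • M').charpoly := by
    unfold Matrix.charpoly
    rw [← hconj, Matrix.det_mul, Matrix.det_mul]
    have : D.det * E.det = 1 := by rw [← Matrix.det_mul, hDE, Matrix.det_one]
    calc (Matrix.charmatrix M').det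
        = (Matrix.charmatrix M').det * (D.det * E.det) := by rw [this, mul_one]
      _ = D.det * (Matrix.charmatrix M').det * E.det := by ring
  -- rescaling of the variable
  set ψ : Polynomial R →+* Polynomial R :=
    Polynomial.eval₂RingHom (Polynomial.C) (Polynomial.C tinv * Polynomial.X) with hψ
  have hmat : Matrix.charmatrix (t • M')
      = Polynomial.C t • ((Matrix.charmatrix M').map ψ) := by
    refine Matrix.ext fun pp qq => ?_
    rw [Matrix.smul_apply, Matrix.map_apply]
    by_cases hpq : pp = qq
    · subst hpq
      rw [Matrix.charmatrix_apply_eq, Matrix.charmatrix_apply_eq, map_sub,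
        hψ, Polynomial.coe_eval₂RingHom, Polynomial.eval₂_X, Polynomial.eval₂_C]
      rw [smul_sub, smul_eq_mul, smul_eq_mul, ← mul_assoc, ← Polynomial.C_mul, htt,
        Polynomial.C_1, one_mul, ← Polynomial.C_mul, Matrix.smul_apply, smul_eq_mul]
    · rw [Matrix.charmatrix_apply_ne _ _ _ hpq, Matrix.charmatrix_apply_ne _ _ _ hpq,
        map_neg, hψ, Polynomial.coe_eval₂RingHom, Polynomial.eval₂_C, smul_neg,
        smul_eq_mul, ← Polynomial.C_mul, Matrix.smul_apply, smul_eq_mul]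
  have hdet2 : M'.charpoly = ψ M'.charpoly := by
    conv_lhs => rw [hdet1]
    unfold Matrix.charpoly
    rw [hmat, Matrix.det_smul, ← RingHom.mapMatrix_apply, ← RingHom.map_det,
      ← map_pow, htN, Polynomial.C_1, one_mul]
  -- extract the coefficient identity
  set e : ℕ := ((m - 1) * d) % m with he
  have hcoeff : algebraMap F R (p.coeff d) = t ^ e * algebraMap F R (p.coeff d) := by
    have h5 := congrArg (fun q => q.coeff d) hdet2
    simp only [hψ, Polynomial.coe_eval₂RingHom] at h5
    rw [coeff_eval₂_C_mul_X, hp', Polynomial.coeff_map] at h5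
    have h6 : t ^ e = tinv ^ d := by
      rw [he, hpow, htinv, ← pow_mul]
    rw [h6]
    exact h5
  have hene : e ≠ 0 := by
    intro h0
    have h6 : m ∣ (m - 1) * d := by
      rw [he] at h0
      exact Nat.dvd_of_mod_eq_zero h0
    have h7 : m ∣ m * d := Dvd.intro d rfl
    have h8 : m * d - (m - 1) * d = d := by
      cases m with
      | zero => exact absurd rfl (NeZero.ne 0)
      | succ mm => rw [Nat.succ_sub_one, Nat.succ_mul]; omega
    exact hd (h8 ▸ Nat.dvd_sub h7 h6)
  have helt : e < m := Nat.mod_lt _ (Nat.pos_of_ne_zero (NeZero.ne m))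
  -- t ^ e - 1 ≠ 0
  have htne : t ^ e - (1 : R) ≠ 0 := by
    intro h0
    have h9 : AdjoinRoot.mk g (X ^ e - 1) = 0 := by
      rw [map_sub, map_pow, AdjoinRoot.mk_X, map_one]
      exact h0
    have h10 : g ∣ X ^ e - 1 := AdjoinRoot.mk_eq_zero.mp h9
    have h11 : (X ^ e - 1 : F[X]) ≠ 0 := by
      have := X_pow_sub_C_ne_zero (Nat.pos_of_ne_zero hene) (1 : F)
      simpa using this
    have h12 := Polynomial.degree_le_of_dvd h10 h11
    rw [hg] at h12
    have hdg : (X ^ m - 1 : F[X]).degree = m := by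
      have := degree_X_pow_sub_C (Nat.pos_of_ne_zero (NeZero.ne m)) (1 : F)
      simpa using this
    have hde : (X ^ e - 1 : F[X]).degree = e := by
      have := degree_X_pow_sub_C (Nat.pos_of_ne_zero hene) (1 : F)
      simpa using this
    rw [hdg, hde] at h12
    exact absurd (Nat.cast_le.mp h12) (by omega)
  -- conclude
  have h13 : p.coeff d • (t ^ e - (1 : R)) = 0 := by
    rw [Algebra.smul_def, mul_sub, mul_one, mul_comm, ← hcoeff, sub_self]
  rcases smul_eq_zero.mp h13 with h | h
  · exact h
  · exact absurd h htne

/-- Let `V = W₀ ⊕ ⋯ ⊕ W_{m-1}` be a finite-dimensional vector space, and `π` a linear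
automorphism of `V` with `π(Wᵢ) = W_{i+1 mod m}`. Then the characteristic polynomial of
`π` has the form `f(T^m)` for a polynomial `f` of degree `dim W₀`. -/
theorem stmt2 (F V : Type*) [Field F] [AddCommGroup V] [Module F V] [FiniteDimensional F V]
    (m : ℕ) (hm : 1 ≤ m) (W : ZMod m → Submodule F V)
    (hW : DirectSum.IsInternal W)
    (π : V →ₗ[F] V) (hπ : Function.Bijective π)
    (hmap : ∀ i : ZMod m, Submodule.map π (W i) = W (i + 1)) :
    ∃ f : Polynomial F, f.natDegree = Module.finrank F (W 0) ∧
      LinearMap.charpoly π = f.comp (Polynomial.X ^ m) := by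
  haveI : NeZero m := ⟨by omega⟩
  classical
  set n := Module.finrank F (W 0) with hn
  -- all the W i have the same dimension
  have hstep : ∀ i : ZMod m, Module.finrank F (W (i + 1)) = Module.finrank F (W i) := by
    intro i
    rw [← hmap i]
    exact (Submodule.equivMapOfInjective π hπ.1 (W i)).finrank_eq.symm
  have hnat : ∀ k : ℕ, Module.finrank F (W (k : ZMod m)) = n := by
    intro k
    induction k with
    | zero => rw [Nat.cast_zero, hn]
    | succ k ih => rw [Nat.cast_succ, hstep, ih]
  have hfin : ∀ i : ZMod m, Module.finrank F (W i) = n := by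
    intro i
    have h := hnat i.val
    rwa [ZMod.natCast_rightInverse i] at h
  -- adapted basis
  let bW : (i : ZMod m) → Module.Basis (Fin n) F (W i) := fun i =>
    Module.finBasisOfFinrankEq F (W i) (hfin i)
  let b : Module.Basis (Σ _ : ZMod m, Fin n) F V := hW.collectedBasis bW
  let A := LinearMap.toMatrix b b π
  have hA : ∀ p q : Σ _ : ZMod m, Fin n, p.1 ≠ q.1 + 1 → A p q = 0 := by
    intro p q hpq
    obtain ⟨i, k⟩ := p
    have hmem : π (b q) ∈ W (q.1 + 1) := by
      rw [← hmap q.1]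
      exact Submodule.mem_map_of_mem (hW.collectedBasis_mem bW q)
    have : A ⟨i, k⟩ q = b.repr (π (b q)) ⟨i, k⟩ := LinearMap.toMatrix_apply b b π ⟨i, k⟩ q
    rw [this]
    exact hW.collectedBasis_repr_of_mem_ne bW (Ne.symm hpq) hmem
  have hcardsig : Fintype.card (Σ _ : ZMod m, Fin n) = m * n := by
    simp [Fintype.card_sigma, ZMod.card]
  have hchar : LinearMap.charpoly π = A.charpoly := (LinearMap.charpoly_toMatrix π b).symm
  set q : F[X] := A.charpoly with hq
  have hvanish : ∀ d : ℕ, ¬ m ∣ d → q.coeff d = 0 := by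
    intro d hd
    exact key_matrix_lemma (fun p => p.1) A hA (hcardsig ▸ Dvd.intro n rfl) hd
  have hdeg : q.natDegree = m * n := by
    rw [hq, Matrix.charpoly_natDegree_eq_dim, hcardsig]
  have hmonic : q.Monic := Matrix.charpoly_monic A
  -- the polynomial f
  set f : F[X] := ∑ k ∈ Finset.range (n + 1), Polynomial.C (q.coeff (m * k))
    * Polynomial.X ^ k with hf
  have hfc : ∀ k : ℕ, f.coeff k = if k ≤ n then q.coeff (m * k) else 0 := by
    intro k
    have hterm : ∀ j : ℕ, ((Polynomial.C (q.coeff (m * j)) : F[X])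
        * Polynomial.X ^ j).coeff k = if k = j then q.coeff (m * j) else 0 := by
      intro j
      rw [Polynomial.coeff_C_mul, Polynomial.coeff_X_pow]
      by_cases h : k = j <;> simp [h]
    rw [hf, Polynomial.finset_sum_coeff]
    by_cases hk : k ≤ n
    · rw [if_pos hk, Finset.sum_eq_single k]
      · rw [hterm, if_pos rfl]
      · intro j hj hjk
        rw [hterm, if_neg (fun h => hjk h.symm)]
      · intro hk'
        exact absurd (Finset.mem_range.mpr (by omega)) hk'
    · rw [if_neg hk]
      refine Finset.sum_eq_zero fun j hj => ?_
      rw [Finset.mem_range] at hj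
      rw [hterm, if_neg (by omega)]
  have hfn : f.natDegree = n := by
    apply le_antisymm
    · rw [Polynomial.natDegree_le_iff_coeff_eq_zero]
      intro N hN
      rw [hfc, if_neg (by omega)]
    · apply Polynomial.le_natDegree_of_ne_zero
      rw [hfc, if_pos le_rfl, ← hdeg]
      rw [← Polynomial.leadingCoeff]
      rw [hmonic.leadingCoeff]
      exact one_ne_zero
  refine ⟨f, hfn, ?_⟩
  rw [hchar]
  -- q = f.comp (X ^ m)
  have hcompc : ∀ d : ℕ, (f.comp (Polynomial.X ^ m)).coeff d = q.coeff d := by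
    intro d
    have hcomp1 : f.comp (Polynomial.X ^ m)
        = ∑ k ∈ Finset.range (n + 1), Polynomial.C (q.coeff (m * k))
          * Polynomial.X ^ (m * k) := by
      have hsum : (∑ k ∈ Finset.range (n + 1), Polynomial.C (q.coeff (m * k))
            * Polynomial.X ^ k).comp (Polynomial.X ^ m)
          = ∑ k ∈ Finset.range (n + 1), (Polynomial.C (q.coeff (m * k))
            * Polynomial.X ^ k).comp (Polynomial.X ^ m) :=
        map_sum (Polynomial.compRingHom (Polynomial.X ^ m)) _ _
      rw [hsum]
      refine Finset.sum_congr rfl fun k _ => ?_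
      rw [Polynomial.mul_comp, Polynomial.C_comp, Polynomial.X_pow_comp, ← pow_mul]
    have hterm : ∀ j : ℕ, ((Polynomial.C (q.coeff (m * j)) : F[X])
        * Polynomial.X ^ (m * j)).coeff d = if d = m * j then q.coeff (m * j) else 0 := by
      intro j
      rw [Polynomial.coeff_C_mul, Polynomial.coeff_X_pow]
      by_cases h : d = m * j <;> simp [h]
    rw [hcomp1, Polynomial.finset_sum_coeff]
    by_cases hdvd : m ∣ d
    · obtain ⟨k₀, rfl⟩ := hdvd
      by_cases hk₀ : k₀ ≤ n
      · rw [Finset.sum_eq_single k₀]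
        · rw [hterm, if_pos rfl]
        · intro j hj hjk
          rw [hterm, if_neg (by
            intro h
            exact hjk (Nat.eq_of_mul_eq_mul_left (by omega) h.symm))]
        · intro hk'
          exact absurd (Finset.mem_range.mpr (by omega)) hk'
      · have h1 : q.coeff (m * k₀) = 0 := by
          apply Polynomial.coeff_eq_zero_of_natDegree_lt
          rw [hdeg]
          nlinarith [Nat.mul_le_mul_left m (show n + 1 ≤ k₀ by omega)]
        rw [h1]
        refine Finset.sum_eq_zero fun j hj => ?_
        rw [Finset.mem_range] at hj
        rw [hterm, if_neg (by
          intro h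
          have := Nat.eq_of_mul_eq_mul_left (show 0 < m by omega) h
          omega)]
    · rw [hvanish d hdvd]
      refine Finset.sum_eq_zero fun j hj => ?_
      rw [hterm, if_neg (fun h => hdvd ⟨j, h⟩)]
  exact Polynomial.ext fun d => (hcompc d).symm
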